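/- Let z ∈ ℂ satisfy Σ_{n≥1} |κ_n| |z|^n < 1. Then the series Σ_{n≥0} μ_n z^n converges absolutely and Σ_{n≥0} μ_n z^n = 1 / (1 − Σ_{n≥1} κ_n z^n). (The analytic moment–cumulant resumming identity underlying Theorem 1.) -/

import Mathlib

open Finset

private lemma swap_conv (f g : ℕ → ℝ) (M : ℕ) :
    ∑ n ∈ range M, ∑ j ∈ range (n + 1), f j * g (n - j)
      = ∑ j ∈ range M, f j * ∑ i ∈ range (M - j), g i := by
  induction M with
  | zero => simp
  | succ M ih =>
    rw [sum_range_succ, ih, sum_range_succ]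
    have h1 : ∑ j ∈ range M, f j * ∑ i ∈ range (M + 1 - j), g i
        = ∑ j ∈ range M, (f j * ∑ i ∈ range (M - j), g i + f j * g (M - j)) := by
      refine sum_congr rfl fun j hj => ?_
      have hj' : j < M := mem_range.mp hj
      have h2 : M + 1 - j = (M - j) + 1 := by omega
      rw [h2, sum_range_succ, mul_add]
    rw [Finset.sum_range_succ (f := fun j => f j * ∑ i ∈ range (M + 1 - j), g i), h1,
      sum_add_distrib]
    have h3 : M + 1 - M = 1 := by omega
    rw [h3, sum_range_one]
    simp only [Nat.sub_self]
    ring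

/-- Analytic moment–cumulant resumming identity. If the moment–cumulant recursion holds and
`∑_{n≥1} |κ_n| |z|^n` converges to a value `< 1`, then `∑_{n≥0} μ_n z^n` converges
absolutely and equals `1 / (1 - ∑_{n≥1} κ_n z^n)`. -/
theorem moment_cumulant_resumming
    (μ : ℕ → ℂ) (κ : ℕ → ℂ)
    (hμ0 : μ 0 = 1)
    (hrec : ∀ n : ℕ, 1 ≤ n →
      μ n = ∑ k ∈ Finset.Icc 1 n, κ k * μ (n - k))
    (z : ℂ) (S : ℝ)
    (hS : HasSum (fun n : ℕ => ‖κ (n + 1)‖ * ‖z‖ ^ (n + 1)) S)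
    (hS1 : S < 1) :
    Summable (fun n : ℕ => ‖μ n‖ * ‖z‖ ^ n) ∧
    ∃ K : ℂ,
      HasSum (fun n : ℕ => κ (n + 1) * z ^ (n + 1)) K ∧
      HasSum (fun n : ℕ => μ n * z ^ n) (1 / (1 - K)) := by
  set c' : ℕ → ℂ := fun n => κ (n + 1) * z ^ (n + 1) with hc'
  set m : ℕ → ℂ := fun n => μ n * z ^ n with hm
  have hnormc' : (fun n => ‖c' n‖) =
      fun n : ℕ => ‖κ (n + 1)‖ * ‖z‖ ^ (n + 1) := by
    funext n; simp [hc', norm_mul, norm_pow]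
  have hnormm : ∀ n, ‖m n‖ = ‖μ n‖ * ‖z‖ ^ n := by
    intro n; simp [hm, norm_mul, norm_pow]
  have hc'sum : Summable fun n => ‖c' n‖ := by rw [hnormc']; exact hS.summable
  have hS0 : 0 ≤ S := hS.nonneg fun n => by positivity
  have hpart : ∀ N, ∑ j ∈ range N, ‖c' j‖ ≤ S := by
    intro N
    have h := sum_le_hasSum (range N) (fun i _ => by positivity) hS
    refine le_trans (le_of_eq (sum_congr rfl fun i _ => congrFun hnormc' i)) h
  -- convolution identity
  have hconv : ∀ n : ℕ, m (n + 1) = ∑ j ∈ range (n + 1), c' j * m (n - j) := by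
    intro n
    have h1 : μ (n + 1) = ∑ j ∈ range (n + 1), κ (j + 1) * μ (n - j) := by
      rw [hrec (n + 1) (by omega),
        show Finset.Icc 1 (n + 1) = Finset.Ico 1 (n + 2) from (Finset.Ico_add_one_right_eq_Icc (a := 1) (b := n+1)).symm,
        Finset.sum_Ico_eq_sum_range]
      refine sum_congr (by norm_num) fun j hj => ?_
      have h : n + 1 - (1 + j) = n - j := by omega
      rw [h, add_comm 1 j]
    show μ (n + 1) * z ^ (n + 1) = _
    rw [h1, sum_mul]
    refine sum_congr rfl fun j hj => ?_
    have hj' : j < n + 1 := mem_range.mp hj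
    have hz : z ^ (n + 1) = z ^ (j + 1) * z ^ (n - j) := by
      rw [← pow_add]; congr 1; omega
    simp only [hc', hm]
    rw [hz]; ring
  have hnormconv : ∀ n : ℕ, ‖m (n + 1)‖ ≤ ∑ j ∈ range (n + 1), ‖c' j‖ * ‖m (n - j)‖ := by
    intro n
    rw [hconv n]
    exact (norm_sum_le _ _).trans (le_of_eq (sum_congr rfl fun j _ => norm_mul _ _))
  have hm0 : ‖m 0‖ = 1 := by simp [hm, hμ0]
  -- partial sum bound
  have hkey : ∀ N, ∑ n ∈ range N, ‖m n‖ ≤ 1 + S * ∑ n ∈ range N, ‖m n‖ := by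
    intro N
    match N with
    | 0 => simp
    | (M + 1) =>
      have h2 : ∑ n ∈ range M, ‖m (n + 1)‖
          ≤ ∑ n ∈ range M, ∑ j ∈ range (n + 1), ‖c' j‖ * ‖m (n - j)‖ :=
        sum_le_sum fun n _ => hnormconv n
      replace h2 := h2.trans
        (le_of_eq (swap_conv (fun j => ‖c' j‖) (fun i => ‖m i‖) M))
      set P : ℝ := ∑ n ∈ range (M + 1), ‖m n‖ with hP
      have h3 : ∑ j ∈ range M, ‖c' j‖ * ∑ i ∈ range (M - j), ‖m i‖
          ≤ ∑ j ∈ range M, ‖c' j‖ * P := by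
        refine sum_le_sum fun j hj => ?_
        refine mul_le_mul_of_nonneg_left ?_ (norm_nonneg _)
        exact sum_le_sum_of_subset_of_nonneg
          (range_subset_range.mpr (by omega)) (fun i _ _ => norm_nonneg _)
      have h4 : ∑ j ∈ range M, ‖c' j‖ * P ≤ S * P := by
        rw [← sum_mul]
        refine mul_le_mul_of_nonneg_right (hpart M) ?_
        exact sum_nonneg fun i _ => norm_nonneg _
      have hPsum : ∑ n ∈ range M, ‖m (n + 1)‖ ≤ S * P := le_trans h2 (le_trans h3 h4)
      have h5 : P = ∑ n ∈ range M, ‖m (n + 1)‖ + ‖m 0‖ := by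
        rw [hP, Finset.sum_range_succ']
      rw [hm0] at h5
      linarith
  have h1S : (0:ℝ) < 1 - S := by linarith
  have hbdd : ∀ N, ∑ n ∈ range N, ‖m n‖ ≤ 1 / (1 - S) := by
    intro N
    rw [le_div_iff₀ h1S]
    have := hkey N
    nlinarith
  have hmsum : Summable fun n => ‖m n‖ :=
    summable_of_sum_range_le (fun n => norm_nonneg _) hbdd
  -- first conjunct
  have hsum1 : Summable (fun n : ℕ => ‖μ n‖ * ‖z‖ ^ n) := by
    refine hmsum.congr fun n => (hnormm n)
  refine ⟨hsum1, ?_⟩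
  have hc'sum' : Summable c' := hc'sum.of_norm
  have hmsum' : Summable m := hmsum.of_norm
  set K : ℂ := ∑' n, c' n with hK
  set M : ℂ := ∑' n, m n with hM
  have hcauchy : K * M = ∑' n, ∑ k ∈ range (n + 1), c' k * m (n - k) :=
    tsum_mul_tsum_eq_tsum_sum_range_of_summable_norm hc'sum hmsum
  have hcauchy2 : K * M = ∑' n, m (n + 1) := by
    rw [hcauchy]
    exact tsum_congr fun n => (hconv n).symm
  have hsplit : M = m 0 + ∑' n, m (n + 1) := Summable.tsum_eq_zero_add hmsum'
  have hm0' : m 0 = 1 := by simp [hm, hμ0]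
  have hMK : (1 - K) * M = 1 := by
    rw [hm0'] at hsplit
    rw [sub_mul, one_mul, hcauchy2]
    rw [hsplit]; ring
  have hKne : (1 - K) ≠ 0 := by
    intro h
    have hK1 : K = 1 := by linear_combination -h
    have hnK : ‖K‖ ≤ S := by
      have h1 : ‖K‖ ≤ ∑' n, ‖c' n‖ := norm_tsum_le_tsum_norm hc'sum
      have h2 : ∑' n, ‖c' n‖ = S := by rw [hnormc']; exact hS.tsum_eq
      linarith
    rw [hK1] at hnK
    simp at hnK
    linarith
  have hMeq : M = 1 / (1 - K) := by
    field_simp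
    linear_combination hMK
  exact ⟨K, hc'sum'.hasSum, hMeq ▸ hmsum'.hasSum⟩
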